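/- The series ∑_{n=10}^∞ (log log n) * (p_{n+1} - p_n) / (n * (log n)^3) converges, where p_n denotes the n-th prime. -/

import Mathlib

open Finset Filter


lemma centralBinom_le_pow_count (n : ℕ) (hn : 0 < n) :
    Nat.centralBinom n ≤ (2 * n) ^ (Nat.count Nat.Prime (2 * n + 1)) := by
  have h0 : Nat.centralBinom n ≠ 0 := (Nat.centralBinom_pos n).ne'
  have hsub : (Nat.centralBinom n).primeFactors ⊆
      (Finset.range (2 * n + 1)).filter Nat.Prime := by
    intro p hp
    rw [Nat.mem_primeFactors] at hp
    have hpos : 0 < (Nat.centralBinom n).factorization p := by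
      exact Nat.Prime.factorization_pos_of_dvd hp.1 h0 hp.2.1
    have hle : p ≤ 2 * n := Nat.le_two_mul_of_factorization_centralBinom_pos hpos
    simp [Finset.mem_filter, Finset.mem_range, hp.1, Nat.lt_succ_of_le hle]
  calc Nat.centralBinom n
      = (Nat.centralBinom n).factorization.prod (· ^ ·) :=
        (Nat.factorization_prod_pow_eq_self h0).symm
    _ = ∏ p ∈ (Nat.centralBinom n).primeFactors, p ^ (Nat.centralBinom n).factorization p := by
        rw [Finsupp.prod, Nat.support_factorization]
    _ ≤ (2 * n) ^ (Nat.centralBinom n).primeFactors.card := by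
        apply Finset.prod_le_pow_card
        intro p hp
        exact Nat.pow_factorization_choose_le (by omega)
    _ ≤ (2 * n) ^ (Nat.count Nat.Prime (2 * n + 1)) := by
        apply Nat.pow_le_pow_right (by omega)
        rw [Nat.count_eq_card_filter_range]
        exact Finset.card_le_card hsub

lemma four_pow_le_pow_count (n : ℕ) (hn : 4 ≤ n) :
    4 ^ n ≤ (2 * n) ^ (Nat.count Nat.Prime (2 * n + 1) + 1) := by
  calc 4 ^ n ≤ n * Nat.centralBinom n := (Nat.four_pow_lt_mul_centralBinom n hn).le
    _ ≤ (2 * n) * (2 * n) ^ (Nat.count Nat.Prime (2 * n + 1)) := by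
        exact Nat.mul_le_mul (by omega) (centralBinom_le_pow_count n (by omega))
    _ = (2 * n) ^ (Nat.count Nat.Prime (2 * n + 1) + 1) := by ring

lemma nth_prime_le {k : ℕ} (hk : 4 ≤ Real.log k) :
    (Nat.nth Nat.Prime k : ℝ) ≤ 8 * k * Real.log k := by
  -- k is at least 54
  have hkr : (54 : ℝ) ≤ (k : ℝ) := by
    have hk0 : (0:ℝ) < (k:ℝ) := by
      rcases Nat.eq_zero_or_pos k with h | h
      · exfalso; rw [h] at hk; simp [Real.log_zero] at hk; linarith
      · exact_mod_cast h
    have h1 : Real.exp 4 ≤ (k:ℝ) := by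
      calc Real.exp 4 ≤ Real.exp (Real.log k) := Real.exp_le_exp.mpr hk
        _ = (k:ℝ) := Real.exp_log hk0
    have h2 : (54:ℝ) ≤ Real.exp 4 := by
      have h3 := Real.exp_one_gt_d9
      have h4 : Real.exp 4 = (Real.exp 1)^4 := by
        rw [← Real.exp_nat_mul]; norm_num
      rw [h4]
      have h5 : (2.7182818283:ℝ)^4 ≤ (Real.exp 1)^4 :=
        pow_le_pow_left₀ (by norm_num) h3.le 4
      nlinarith
    linarith
  have hk54 : 54 ≤ k := by exact_mod_cast hkr
  set L := Nat.log 2 k with hLdef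
  set n := 2 * k * (L + 2) with hndef
  have hn4 : 4 ≤ n := by
    have : 1 ≤ k := by omega
    calc 4 ≤ 2 * 1 * (0 + 2) := by norm_num
      _ ≤ 2 * k * (L + 2) := by
          apply Nat.mul_le_mul (by omega) (by omega)
  have hkpos : (0:ℝ) < (k:ℝ) := by positivity
  have hlkpos : (0:ℝ) < Real.log k := by linarith
  have h2a : (0.6931 : ℝ) < Real.log 2 := by
    have := Real.log_two_gt_d9; linarith
  have h2b : Real.log 2 < 0.6932 := by
    have := Real.log_two_lt_d9; linarith
  have hL1 : (L : ℝ) * Real.log 2 ≤ Real.log k := by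
    have h := Nat.pow_log_le_self 2 (show k ≠ 0 by omega)
    have : ((2:ℕ)^L : ℝ) ≤ (k:ℝ) := by exact_mod_cast h
    calc (L : ℝ) * Real.log 2 = Real.log ((2:ℝ)^L) := by rw [Real.log_pow]
      _ ≤ Real.log k := Real.log_le_log (by positivity) (by exact_mod_cast h)
  have hL2 : Real.log k ≤ ((L : ℝ) + 1) * Real.log 2 := by
    have h := (Nat.lt_pow_succ_log_self (show 1 < 2 by norm_num) k).le
    have h' : (k : ℝ) ≤ ((2:ℕ) ^ (L + 1) : ℝ) := by exact_mod_cast h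
    calc Real.log k ≤ Real.log ((2:ℝ) ^ (L+1)) := Real.log_le_log hkpos (by exact_mod_cast h')
      _ = ((L:ℝ)+1) * Real.log 2 := by rw [Real.log_pow]; push_cast; ring
  have hLle : ((L : ℝ) + 2) ≤ 2 * Real.log k := by nlinarith
  have hLge : Real.log k ≤ ((L : ℝ) + 2) * Real.log 2 := by nlinarith
  -- cast n
  have hnr : ((n : ℝ)) = 2 * k * ((L:ℝ) + 2) := by push_cast [hndef]; ring
  have h2n : ((2 * n : ℕ) : ℝ) = 4 * k * ((L:ℝ) + 2) := by push_cast [hndef]; ring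
  have hlk_le_k : Real.log k ≤ (k : ℝ) := by
    have := Real.log_le_sub_one_of_pos hkpos; linarith
  have h2n_le : ((2 * n : ℕ) : ℝ) ≤ (k:ℝ)^3 := by
    rw [h2n]
    calc 4 * (k:ℝ) * ((L:ℝ) + 2) ≤ 4 * (k:ℝ) * (2 * Real.log k) := by
          apply mul_le_mul_of_nonneg_left hLle (by positivity)
      _ ≤ 4 * (k:ℝ) * (2 * (k:ℝ)) := by nlinarith
      _ ≤ (k:ℝ)^3 := by nlinarith [sq_nonneg ((k:ℝ) - 8), hkpos.le, hkr]
  have hlog2n : Real.log ((2 * n : ℕ) : ℝ) ≤ 3 * Real.log k := by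
    calc Real.log ((2*n : ℕ) : ℝ) ≤ Real.log ((k:ℝ)^3) := by
          apply Real.log_le_log (by rw [h2n]; positivity) h2n_le
      _ = 3 * Real.log k := by rw [Real.log_pow]; norm_num
  have hlog2npos : 0 < Real.log ((2 * n : ℕ) : ℝ) := by
    apply Real.log_pos
    rw [h2n]; nlinarith
  set π := Nat.count Nat.Prime (2 * n + 1) with hπ
  have hcast : ((4:ℝ)) ^ n ≤ ((2 * n : ℕ) : ℝ) ^ (π + 1) := by
    exact_mod_cast four_pow_le_pow_count n hn4
  have hlog : (n : ℝ) * Real.log 4 ≤ ((π:ℝ) + 1) * Real.log ((2*n : ℕ) : ℝ) := by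
    have := Real.log_le_log (by positivity) hcast
    rw [Real.log_pow, Real.log_pow] at this
    push_cast at this ⊢
    linarith
  have hlog4 : Real.log 4 = 2 * Real.log 2 := by
    rw [show (4:ℝ) = 2^2 by norm_num, Real.log_pow]; push_cast; ring
  have hkey : ((k:ℝ) + 2) * Real.log ((2*n:ℕ):ℝ) ≤ (n:ℝ) * Real.log 4 := by
    rw [hlog4, hnr]
    calc ((k:ℝ) + 2) * Real.log ((2*n:ℕ):ℝ) ≤ ((k:ℝ)+2) * (3 * Real.log k) := by
          apply mul_le_mul_of_nonneg_left hlog2n (by positivity)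
      _ ≤ 4 * k * Real.log k := by nlinarith
      _ ≤ 4 * k * (((L:ℝ)+2) * Real.log 2) := by
          apply mul_le_mul_of_nonneg_left hLge (by positivity)
      _ = 2 * (k:ℝ) * ((L:ℝ)+2) * (2 * Real.log 2) := by ring
  have hπk : (k:ℝ) + 2 ≤ (π:ℝ) + 1 := by
    have := hkey.trans hlog
    exact le_of_mul_le_mul_right (by linarith) hlog2npos
  have hπk2 : (k:ℝ) + 1 ≤ (π:ℝ) := by linarith
  have hπk' : k < π := by exact_mod_cast hπk2
  have hqlt : Nat.nth Nat.Prime k < 2 * n + 1 := Nat.nth_lt_of_lt_count hπk'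
  have hqle : (Nat.nth Nat.Prime k : ℝ) ≤ ((2 * n : ℕ) : ℝ) := by
    exact_mod_cast Nat.lt_succ_iff.mp hqlt
  calc (Nat.nth Nat.Prime k : ℝ) ≤ ((2*n:ℕ):ℝ) := hqle
    _ = 4 * (k:ℝ) * ((L:ℝ) + 2) := h2n
    _ ≤ 4 * (k:ℝ) * (2 * Real.log k) := by
        apply mul_le_mul_of_nonneg_left hLle (by positivity)
    _ = 8 * k * Real.log k := by ring

noncomputable def auxA (n : ℕ) : ℝ := Real.log (Real.log n) / ((n : ℝ) * Real.log n ^ 3)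
noncomputable def auxC (n : ℕ) : ℝ := Real.log (Real.log n) / Real.log n

lemma basic_facts {n : ℕ} (h16 : 16 ≤ Real.log (Real.log n)) :
    16 ≤ Real.log n ∧ 3 ≤ n := by
  have hnn : (0:ℝ) ≤ Real.log n := Real.log_natCast_nonneg n
  have hLn1 : 1 < Real.log n := by
    by_contra h
    push_neg at h
    have : Real.log (Real.log n) ≤ 0 := Real.log_nonpos hnn h
    linarith
  have hLn : 16 ≤ Real.log n := by
    have h1 : Real.exp 16 ≤ Real.exp (Real.log (Real.log n)) := Real.exp_le_exp.mpr h16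
    rw [Real.exp_log (by linarith)] at h1
    have h2 : (17:ℝ) ≤ Real.exp 16 := by
      have := Real.add_one_le_exp (16:ℝ); linarith
    linarith
  refine ⟨hLn, ?_⟩
  by_contra h
  push_neg at h
  interval_cases n <;> simp_all <;> nlinarith [Real.log_two_lt_d9]


/-- Pure algebra: cube expansion bound. -/
lemma cube_helper {x e m : ℝ} (hx : 16 ≤ x) (he0 : 0 < e) (he1 : e ≤ 1/3)
    (hm : m * e = 1) : (m + 1) * (x + e) ^ 3 ≤ (m + 15) * x ^ 3 := by
  have expand : (m + 1) * (x + e) ^ 3 =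
      m * x ^ 3 + 3 * x ^ 2 + 3 * x * e + e ^ 2 + (x + e) ^ 3 := by
    linear_combination (3 * x ^ 2 + 3 * x * e + e ^ 2) * hm
  have hxpos : (0:ℝ) < x := by linarith
  have hcube : (x + e) ^ 3 ≤ (2 * x) ^ 3 := by
    apply pow_le_pow_left₀ (by linarith) (by linarith)
  have hA : 16 * x ^ 2 ≤ x ^ 3 := by nlinarith [sq_nonneg x]
  have hB : x ≤ x ^ 2 := by nlinarith
  rw [expand]
  nlinarith [hcube, hA, hB, sq_nonneg x, sq_nonneg e, mul_pos hxpos he0]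

set_option maxHeartbeats 1000000 in
/-- Main per-term inequality, pure real form. -/
lemma main_helper {m x y u v : ℝ} (hm : 3 ≤ m) (hx : 16 ≤ x) (hxy : x ≤ y)
    (hy2 : y ≤ x + 1/m) (hgap : 1/(m+1) ≤ y - x) (hu : 16 ≤ u) (huv : u ≤ v)
    (hdiff : v - u ≤ 1/(m*x)) :
    (u/(m*x^3) - v/((m+1)*y^3)) * (8*m*x) ≤ 240 * (u/x - v/y) ∧ 0 ≤ u/x - v/y := by
  have hm0 : (0:ℝ) < m := by linarith
  have hx0 : (0:ℝ) < x := by linarith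
  have hy0 : (0:ℝ) < y := by linarith
  have hu0 : (0:ℝ) < u := by linarith
  have hv0 : (0:ℝ) < v := by linarith
  have hyx : y ≤ 2 * x := by
    have : 1/m ≤ 1 := by rw [div_le_one hm0]; linarith
    linarith
  have key1 : (m + 1) * y ^ 3 ≤ (m + 15) * x ^ 3 := by
    have h1 : (m+1) * y^3 ≤ (m+1) * (x + 1/m)^3 := by
      apply mul_le_mul_of_nonneg_left ?_ (by linarith)
      apply pow_le_pow_left₀ hy0.le hy2
    have h2 := cube_helper hx (by positivity) (by rw [div_le_div_iff₀ hm0 (by norm_num)]; linarith)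
      (by field_simp : m * (1/m) = 1)
    linarith
  -- Step A
  have d1 : (0:ℝ) < m * x^3 := by positivity
  have d2 : (0:ℝ) < (m+1) * y^3 := by positivity
  have bracket : 1/(m*x^3) - 1/((m+1)*y^3) ≤ 15/(m*(m+1)*y^3) := by
    rw [div_sub_div _ _ d1.ne' d2.ne', div_le_div_iff₀ (by positivity) (by positivity)]
    have h3 : (m+1)*y^3 - m*x^3 ≤ 15 * x^3 := by linarith
    nlinarith [mul_le_mul_of_nonneg_right h3 (le_of_lt (by positivity : (0:ℝ) < m*(m+1)*y^3)),
      mul_pos d1 d2]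
  have stepA : u/(m*x^3) - v/((m+1)*y^3) ≤ 15*v/(m*(m+1)*y^3) := by
    have h4 : u/(m*x^3) ≤ v/(m*x^3) := by gcongr
    have h5 : v/(m*x^3) - v/((m+1)*y^3) = v * (1/(m*x^3) - 1/((m+1)*y^3)) := by ring
    have h6 : v * (1/(m*x^3) - 1/((m+1)*y^3)) ≤ v * (15/(m*(m+1)*y^3)) :=
      mul_le_mul_of_nonneg_left bracket hv0.le
    have h7 : v * (15/(m*(m+1)*y^3)) = 15*v/(m*(m+1)*y^3) := by ring
    linarith
  -- Step B
  have stepB : 15*v/(m*(m+1)*y^3) * (8*m*x) ≤ 120*v/((m+1)*y^2) := by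
    have e1 : 15*v/(m*(m+1)*y^3) * (8*m*x) = 120*v*x/((m+1)*y^3) := by
      field_simp
      ring
    rw [e1, div_le_div_iff₀ (by positivity) (by positivity)]
    nlinarith [mul_pos hm0 hy0, mul_pos hv0 hx0, sq_nonneg y, mul_pos hv0 hy0,
      mul_le_mul_of_nonneg_left hxy (le_of_lt (by positivity : (0:ℝ) < 120*v*((m+1)*y^2)))]
  -- Step C (lower bound for the telescoping difference)
  have hgap1 : 1 ≤ (m+1) * (y - x) := by
    have h := mul_le_mul_of_nonneg_left hgap (by linarith : (0:ℝ) ≤ m+1)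
    have : (m+1) * (1/(m+1)) = 1 := by field_simp
    linarith
  have hdiff1 : (v - u) * (m*x) ≤ 1 := by
    have h := mul_le_mul_of_nonneg_right hdiff (by positivity : (0:ℝ) ≤ m*x)
    have : 1/(m*x) * (m*x) = 1 := by field_simp
    linarith
  have e2 : u/x - v/y = v*(y-x)/(x*y) - (v-u)/x := by
    field_simp
    ring
  have s1 : v/((m+1)*y^2) ≤ v*(y-x)/(x*y) := by
    rw [div_le_div_iff₀ (by positivity) (by positivity)]
    -- v * (x*y) ≤ v*(y-x) * ((m+1)*y^2)
    have t2 : v*(y*y) * 1 ≤ v*(y*y) * ((m+1)*(y-x)) :=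
      mul_le_mul_of_nonneg_left hgap1 (by positivity)
    nlinarith [mul_le_mul_of_nonneg_left hxy (le_of_lt (mul_pos hv0 hy0))]
  have s2 : (v-u)/x ≤ 1/(m*x^2) := by
    rw [div_le_div_iff₀ hx0 (by positivity)]
    have := mul_le_mul_of_nonneg_right hdiff1 hx0.le
    nlinarith
  have s3 : 1/(m*x^2) ≤ v/(2*(m+1)*y^2) := by
    rw [div_le_div_iff₀ (by positivity) (by positivity)]
    -- 2*(m+1)*y^2 ≤ v*(m*x^2)
    have hsq : y^2 ≤ 4*x^2 := by
      calc y^2 ≤ (2*x)^2 := pow_le_pow_left₀ hy0.le hyx 2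
        _ = 4*x^2 := by ring
    have t3 : 2*(m+1)*y^2 ≤ 4*m*y^2 := by
      nlinarith [mul_nonneg (by linarith : (0:ℝ) ≤ 2*m-2) (sq_nonneg y)]
    have t4 : 4*m*y^2 ≤ 16*m*x^2 := by
      nlinarith [mul_nonneg hm0.le (by linarith : (0:ℝ) ≤ 4*x^2 - y^2)]
    have t5 : 16*m*x^2 ≤ v*(m*x^2) := by
      nlinarith [mul_nonneg (mul_nonneg hm0.le (sq_nonneg x)) (by linarith : (0:ℝ) ≤ v - 16)]
    linarith
  have stepC : v/(2*(m+1)*y^2) ≤ u/x - v/y := by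
    have h8 : v/((m+1)*y^2) - v/(2*(m+1)*y^2) = v/(2*(m+1)*y^2) := by
      field_simp
      ring
    rw [e2]
    have := sub_le_sub s1 s2
    linarith [s3, s1, s2]
  -- Combine
  have final1 : (u/(m*x^3) - v/((m+1)*y^3)) * (8*m*x) ≤ 15*v/(m*(m+1)*y^3) * (8*m*x) :=
    mul_le_mul_of_nonneg_right stepA (by positivity)
  have final2 : (120:ℝ)*v/((m+1)*y^2) = 240 * (v/(2*(m+1)*y^2)) := by
    field_simp
    ring
  constructor
  · calc (u/(m*x^3) - v/((m+1)*y^3)) * (8*m*x)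
        ≤ 15*v/(m*(m+1)*y^3) * (8*m*x) := final1
      _ ≤ 120*v/((m+1)*y^2) := stepB
      _ = 240 * (v/(2*(m+1)*y^2)) := final2
      _ ≤ 240 * (u/x - v/y) := by
          apply mul_le_mul_of_nonneg_left stepC (by norm_num)
  · have hpos : (0:ℝ) < v/(2*(m+1)*y^2) := by positivity
    linarith [stepC]

lemma term_bound {n : ℕ} (h16 : 16 ≤ Real.log (Real.log n)) :
    (auxA n - auxA (n + 1)) * (8 * n * Real.log n) ≤ 240 * (auxC n - auxC (n + 1)) ∧
      0 ≤ auxC n - auxC (n + 1) := by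
  obtain ⟨hLn, hn3⟩ := basic_facts h16
  have hnpos : (0:ℝ) < n := by
    have : (0:ℕ) < n := by omega
    exact_mod_cast this
  have hn3' : (3:ℝ) ≤ n := by exact_mod_cast hn3
  have hcast : ((n + 1 : ℕ) : ℝ) = (n : ℝ) + 1 := by push_cast; ring
  have hLnpos : (0:ℝ) < Real.log n := by linarith
  have hxy : Real.log n ≤ Real.log ((n:ℝ) + 1) := Real.log_le_log hnpos (by linarith)
  have hy0 : (0:ℝ) < Real.log ((n:ℝ) + 1) := lt_of_lt_of_le hLnpos hxy
  have hy2 : Real.log ((n:ℝ) + 1) ≤ Real.log n + 1 / n := by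
    have h1 : Real.log (((n:ℝ) + 1) / n) ≤ ((n:ℝ) + 1) / n - 1 :=
      Real.log_le_sub_one_of_pos (by positivity)
    rw [Real.log_div (by linarith) (by linarith)] at h1
    have h2 : ((n:ℝ) + 1) / n - 1 = 1 / n := by field_simp; ring
    rw [h2] at h1
    linarith
  have hgap : 1 / ((n:ℝ) + 1) ≤ Real.log ((n:ℝ) + 1) - Real.log n := by
    have h1 : Real.log ((n:ℝ) / ((n:ℝ) + 1)) ≤ (n:ℝ) / ((n:ℝ) + 1) - 1 :=
      Real.log_le_sub_one_of_pos (by positivity)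
    rw [Real.log_div (by linarith) (by linarith)] at h1
    have h2 : (n:ℝ) / ((n:ℝ) + 1) - 1 = -(1 / ((n:ℝ) + 1)) := by field_simp; ring
    rw [h2] at h1
    linarith
  have huv : Real.log (Real.log n) ≤ Real.log (Real.log ((n:ℝ) + 1)) :=
    Real.log_le_log hLnpos hxy
  have hdiff : Real.log (Real.log ((n:ℝ) + 1)) - Real.log (Real.log n) ≤
      1 / ((n:ℝ) * Real.log n) := by
    have h1 : Real.log (Real.log ((n:ℝ) + 1) / Real.log n) ≤
        Real.log ((n:ℝ) + 1) / Real.log n - 1 :=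
      Real.log_le_sub_one_of_pos (by positivity)
    rw [Real.log_div hy0.ne' hLnpos.ne'] at h1
    have h2 : Real.log ((n:ℝ) + 1) / Real.log n - 1 =
        (Real.log ((n:ℝ) + 1) - Real.log n) / Real.log n := by field_simp
    rw [h2] at h1
    have h3 : (Real.log ((n:ℝ) + 1) - Real.log n) / Real.log n ≤
        1 / ((n:ℝ) * Real.log n) := by
      rw [div_le_div_iff₀ hLnpos (by positivity)]
      have h4 := mul_le_mul_of_nonneg_left
        (by linarith : Real.log ((n:ℝ)+1) - Real.log n ≤ 1/(n:ℝ)) hnpos.le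
      have h5 : (n:ℝ) * (1/(n:ℝ)) = 1 := by field_simp
      nlinarith [mul_le_mul_of_nonneg_right h4 hLnpos.le]
    linarith
  have H := main_helper hn3' hLn hxy hy2 hgap h16 huv hdiff
  unfold auxA auxC
  rw [hcast]
  exact H

lemma abel_identity (a g : ℕ → ℝ) (m : ℕ) : ∀ N, m ≤ N →
    ∑ n ∈ Finset.Ico m N, a n * (g n - g (n - 1)) + a m * g (m - 1)
      = a N * g (N - 1) + ∑ n ∈ Finset.Ico m N, (a n - a (n + 1)) * g n := by
  intro N hN
  induction N, hN using Nat.le_induction with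
  | base => simp
  | succ N hN ih =>
    rw [Finset.sum_Ico_succ_top hN, Finset.sum_Ico_succ_top hN]
    have h1 : (N + 1) - 1 = N := by omega
    rw [h1]
    have h2 : a N * (g N - g (N - 1)) = a N * g N - a N * g (N - 1) := by ring
    linarith [ih]

lemma telescope_sum (c : ℕ → ℝ) (m : ℕ) : ∀ N, m ≤ N →
    ∑ n ∈ Finset.Ico m N, (c n - c (n + 1)) = c m - c N := by
  intro N hN
  induction N, hN using Nat.le_induction with
  | base => simp
  | succ N hN ih =>
    rw [Finset.sum_Ico_succ_top hN, ih]
    ring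

theorem loglog_gap_series_converges (p : ℕ → ℕ)
    (hp : ∀ n, p (n + 1) = Nat.nth Nat.Prime n) :
    Summable (fun n : ℕ => if 10 ≤ n then
      Real.log (Real.log n) * ((p (n + 1) : ℝ) - (p n : ℝ)) / (n * (Real.log n) ^ 3)
      else 0) := by
  classical
  set Q : ℕ → ℕ := Nat.nth Nat.Prime with hQ
  set g : ℕ → ℝ := fun n => (Q n : ℝ) with hg
  set F : ℕ → ℝ := fun n : ℕ => if 10 ≤ n then
      Real.log (Real.log n) * ((p (n + 1) : ℝ) - (p n : ℝ)) / (n * (Real.log n) ^ 3)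
      else 0 with hF
  have hQmono : Monotone Q := Nat.nth_monotone Nat.infinite_setOf_prime
  have hpn : ∀ n, 1 ≤ n → (p n : ℝ) = g (n - 1) := by
    intro n hn
    have h1 : p ((n - 1) + 1) = Q (n - 1) := hp (n - 1)
    have h2 : (n - 1) + 1 = n := by omega
    rw [h2] at h1
    rw [h1]
  have hF_eq : ∀ n, 10 ≤ n → F n = auxA n * (g n - g (n - 1)) := by
    intro n hn
    have h1 : F n = Real.log (Real.log n) * ((p (n + 1) : ℝ) - (p n : ℝ))
        / (n * (Real.log n) ^ 3) := by
      rw [hF]; simp only [if_pos hn]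
    rw [h1, hp n, hpn n (by omega)]
    unfold auxA
    ring
  have hgap_nonneg : ∀ n : ℕ, 0 ≤ g n - g (n - 1) := by
    intro n
    have := hQmono (Nat.sub_le n 1)
    simp only [hg]
    have : (Q (n-1) : ℝ) ≤ (Q n : ℝ) := by exact_mod_cast this
    linarith
  have hlog1 : ∀ n : ℕ, 10 ≤ n → 1 ≤ Real.log n := by
    intro n hn
    rw [Real.le_log_iff_exp_le (by positivity : (0:ℝ) < (n:ℝ))]
    have h1 : Real.exp 1 < 3 := by
      have := Real.exp_one_lt_d9; linarith
    have h2 : (3:ℝ) ≤ (n:ℝ) := by exact_mod_cast (by omega : 3 ≤ n)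
    linarith
  have hF_nonneg : ∀ n, 0 ≤ F n := by
    intro n
    by_cases hn : 10 ≤ n
    · rw [hF_eq n hn]
      apply mul_nonneg ?_ (hgap_nonneg n)
      unfold auxA
      apply div_nonneg ?_ (by positivity)
      apply Real.log_nonneg (hlog1 n hn)
    · rw [hF]; simp only [if_neg hn]; exact le_refl 0
  -- obtain the threshold
  have htend : Tendsto (fun n : ℕ => Real.log (Real.log n)) atTop atTop :=
    Real.tendsto_log_atTop.comp (Real.tendsto_log_atTop.comp tendsto_natCast_atTop_atTop)
  obtain ⟨m₁, hm₁⟩ := Filter.eventually_atTop.mp (htend.eventually_ge_atTop 16)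
  set m₀ := max m₁ 10 with hm₀
  have hm₀16 : ∀ n, m₀ ≤ n → 16 ≤ Real.log (Real.log n) := fun n hn =>
    hm₁ n (le_trans (le_max_left _ _) hn)
  have hm₀10 : 10 ≤ m₀ := le_max_right _ _
  -- Chebyshev bound for n ≥ m₀
  have hcheb : ∀ n, m₀ ≤ n → (Q n : ℝ) ≤ 8 * n * Real.log n := by
    intro n hn
    have h16 := hm₀16 n hn
    obtain ⟨hLn, _⟩ := basic_facts h16
    exact nth_prime_le (by linarith)
  have hauxCnn : ∀ n, m₀ ≤ n → 0 ≤ auxC n := by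
    intro n hn
    have h16 := hm₀16 n hn
    obtain ⟨hLn, _⟩ := basic_facts h16
    unfold auxC
    apply div_nonneg (by linarith) (by linarith)
  -- boundary term bound : auxA N * g (N-1) ≤ 8
  have hbound_term : ∀ N, m₀ ≤ N → auxA N * g (N - 1) ≤ 8 := by
    intro N hN
    have h16 := hm₀16 N hN
    obtain ⟨hLn, hn3⟩ := basic_facts h16
    have hNpos : (0:ℝ) < (N:ℝ) := by
      have : (0:ℕ) < N := by omega
      exact_mod_cast this
    have hA_nonneg : 0 ≤ auxA N := by
      unfold auxA
      apply div_nonneg (by linarith) (by positivity)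
    have h1 : g (N - 1) ≤ g N := by
      have := hQmono (Nat.sub_le N 1)
      simp only [hg]
      exact_mod_cast this
    have h2 : g N ≤ 8 * N * Real.log N := hcheb N hN
    have h3 : auxA N * g (N - 1) ≤ auxA N * (8 * N * Real.log N) := by
      apply mul_le_mul_of_nonneg_left (le_trans h1 h2) hA_nonneg
    have h4 : auxA N * (8 * N * Real.log N) = 8 * Real.log (Real.log N) / (Real.log N) ^ 2 := by
      unfold auxA
      field_simp
    have h5 : Real.log (Real.log N) ≤ (Real.log N) ^ 2 := by
      have h6 : Real.log (Real.log N) ≤ Real.log N - 1 :=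
        Real.log_le_sub_one_of_pos (by linarith)
      nlinarith
    have h7 : 8 * Real.log (Real.log N) / (Real.log N) ^ 2 ≤ 8 := by
      rw [div_le_iff₀ (by positivity)]
      nlinarith
    linarith
  -- the key partial sum bound on Ico m₀ N
  have hIco : ∀ N, m₀ ≤ N → ∑ n ∈ Finset.Ico m₀ N, F n ≤ 8 + 240 * auxC m₀ := by
    intro N hN
    have hsum_eq : ∑ n ∈ Finset.Ico m₀ N, F n
        = ∑ n ∈ Finset.Ico m₀ N, auxA n * (g n - g (n - 1)) := by
      apply Finset.sum_congr rfl
      intro n hn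
      rw [Finset.mem_Ico] at hn
      exact hF_eq n (le_trans hm₀10 hn.1)
    have habel := abel_identity auxA g m₀ N hN
    have hterm : ∀ n ∈ Finset.Ico m₀ N, (auxA n - auxA (n + 1)) * g n
        ≤ 240 * (auxC n - auxC (n + 1)) := by
      intro n hn
      rw [Finset.mem_Ico] at hn
      have h16 := hm₀16 n hn.1
      obtain ⟨htb, htc⟩ := term_bound h16
      rcases le_or_gt (auxA n - auxA (n + 1)) 0 with hd | hd
      · have h1 : (auxA n - auxA (n + 1)) * g n ≤ 0 := by
          apply mul_nonpos_of_nonpos_of_nonneg hd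
          simp only [hg]; positivity
        linarith
      · have h2 : (auxA n - auxA (n + 1)) * g n
            ≤ (auxA n - auxA (n + 1)) * (8 * n * Real.log n) := by
          apply mul_le_mul_of_nonneg_left (hcheb n hn.1) hd.le
        linarith
    have hsum_le : ∑ n ∈ Finset.Ico m₀ N, (auxA n - auxA (n + 1)) * g n
        ≤ ∑ n ∈ Finset.Ico m₀ N, 240 * (auxC n - auxC (n + 1)) :=
      Finset.sum_le_sum hterm
    have htele : ∑ n ∈ Finset.Ico m₀ N, 240 * (auxC n - auxC (n + 1))
        = 240 * (auxC m₀ - auxC N) := by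
      rw [← Finset.mul_sum, telescope_sum auxC m₀ N hN]
    have hCN := hauxCnn N hN
    have hA0 : 0 ≤ auxA m₀ * g (m₀ - 1) := by
      apply mul_nonneg
      · unfold auxA
        have h16b := hm₀16 m₀ le_rfl
        obtain ⟨hLn, _⟩ := basic_facts h16b
        apply div_nonneg (by linarith) (by positivity)
      · simp only [hg]; positivity
    have hbt := hbound_term N hN
    rw [hsum_eq]
    have := habel
    nlinarith [hsum_le, htele, hCN, hA0, hbt]
  -- final bound
  set C : ℝ := (∑ n ∈ Finset.range m₀, F n) + (8 + 240 * auxC m₀) with hC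
  have hCm₀nn : 0 ≤ auxC m₀ := hauxCnn m₀ le_rfl
  apply summable_of_sum_range_le hF_nonneg (c := C)
  intro N
  rcases le_or_gt N m₀ with hN | hN
  · have h1 : ∑ n ∈ Finset.range N, F n ≤ ∑ n ∈ Finset.range m₀, F n := by
      apply Finset.sum_le_sum_of_subset_of_nonneg
      · exact Finset.range_subset_range.mpr hN
      · intro i _ _; exact hF_nonneg i
    have h2 : (0:ℝ) ≤ 8 + 240 * auxC m₀ := by linarith
    rw [hC]; linarith
  · have hsplit : ∑ n ∈ Finset.range m₀, F n + ∑ n ∈ Finset.Ico m₀ N, F n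
        = ∑ n ∈ Finset.range N, F n := Finset.sum_range_add_sum_Ico F hN.le
    have h3 := hIco N hN.le
    rw [hC]; linarith
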